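/- arXiv:2002.09073 — 3 statements merged into one kernel-verified Lean document; each statement's English description precedes it below -/
import Mathlib

section
/- Improved approximation factor under exponential spectral decay. There exists an absolute constant c > 0 such that the following holds. Let A be an m×n real matrix whose eigenvalues λ₁ ≥ ... ≥ λ_n of AᵀA satisfy c₁·(1−δ)^i ≤ λ_i ≤ c₂·(1−δ)^i for all i ∈ {1,...,n}, where δ ∈ (0,1) and 0 < c₁ ≤ c₂, and set γ = c₂/c₁. Then for every integer k with 1 ≤ k ≤ n−1, if S ~ k-DPP(AᵀA), then E[Er_A(S)] ≤ c·γ·(1 + δk)·OPT_k. -/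
open scoped BigOperators
open Matrix

namespace CSSP

variable {m n : ℕ}

/-- The `j`-th column of `A` as a vector in Euclidean space. -/
noncomputable def col {ι : Type*} (A : Matrix (Fin m) ι ℝ) (j : ι) :
    EuclideanSpace ℝ (Fin m) := WithLp.toLp 2 (fun i => A i j)

/-- The span of the columns of `A` indexed by `S`. -/
noncomputable def colSpan {ι : Type*} (A : Matrix (Fin m) ι ℝ) (S : Finset ι) :
    Submodule ℝ (EuclideanSpace ℝ (Fin m)) :=
  Submodule.span ℝ {x | ∃ j ∈ S, x = col A j}

/-- `Er_A(S) = ‖A - P_S A‖_F²`, the squared Frobenius norm of the residual of projecting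
the columns of `A` onto the span of the columns indexed by `S`. -/
noncomputable def Er {ι : Type*} [Fintype ι] (A : Matrix (Fin m) ι ℝ) (S : Finset ι) : ℝ :=
  ∑ j, ‖col A j - (Submodule.orthogonalProjectionOnto (colSpan A S) (col A j) : EuclideanSpace ℝ (Fin m))‖ ^ 2

/-- Principal subdeterminant `det K_{S,S}`. -/
noncomputable def pdet (K : Matrix (Fin n) (Fin n) ℝ) (S : Finset (Fin n)) : ℝ :=
  (K.submatrix (fun i : {x : Fin n // x ∈ S} => (i : Fin n))
    (fun i : {x : Fin n // x ∈ S} => (i : Fin n))).det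

/-- Expectation of `f` under the `k`-DPP with kernel `AᵀA`. -/
noncomputable def kDPPExp (A : Matrix (Fin m) (Fin n) ℝ) (k : ℕ)
    (f : Finset (Fin n) → ℝ) : ℝ :=
  (∑ S ∈ Finset.univ.filter (fun S : Finset (Fin n) => S.card = k), pdet (Aᵀ * A) S * f S) /
    (∑ S ∈ Finset.univ.filter (fun S : Finset (Fin n) => S.card = k), pdet (Aᵀ * A) S)

/-- Expectation of `f` under the (random-size) DPP with kernel `(1/α)·AᵀA`. -/
noncomputable def dppExp (A : Matrix (Fin m) (Fin n) ℝ) (α : ℝ)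
    (f : Finset (Fin n) → ℝ) : ℝ :=
  (∑ S : Finset (Fin n), α⁻¹ ^ S.card * pdet (Aᵀ * A) S * f S) /
    (1 + α⁻¹ • (Aᵀ * A)).det

/-- `lam` is the (multi-)set of eigenvalues of the symmetric matrix `K`. -/
def IsEigs (K : Matrix (Fin n) (Fin n) ℝ) (lam : Fin n → ℝ) : Prop :=
  ∃ (hK : K.IsHermitian) (σ : Equiv.Perm (Fin n)), ∀ i, lam i = hK.eigenvalues (σ i)

/-- `OPT_k = Σ_{i > k} λ_i` (1-based indexing in the paper; `lam` here is 0-based). -/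
noncomputable def opt (lam : Fin n → ℝ) (k : ℕ) : ℝ :=
  ∑ i ∈ Finset.univ.filter (fun i : Fin n => k ≤ (i : ℕ)), lam i

/-- Stable rank of order `s`: `sr_s = (Σ_{i > s} λ_i)/λ_{s+1}`. -/
noncomputable def srank (lam : Fin n → ℝ) (s : ℕ) (h : s < n) : ℝ :=
  (∑ i ∈ Finset.univ.filter (fun i : Fin n => s ≤ (i : ℕ)), lam i) / lam ⟨s, h⟩

/-- Squared Frobenius norm. -/
noncomputable def frobSq {ι : Type*} [Fintype ι] (M : Matrix (Fin m) ι ℝ) : ℝ :=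
  ∑ i, ∑ j, M i j ^ 2

/-- The squared Frobenius error of the best rank-`k` approximation of `A`. -/
noncomputable def optRank {ι : Type*} [Fintype ι] [DecidableEq ι]
    (A : Matrix (Fin m) ι ℝ) (k : ℕ) : ℝ :=
  sInf {x | ∃ B : Matrix (Fin m) ι ℝ, B.rank ≤ k ∧ x = frobSq (A - B)}

section Auxiliary

open Finset

set_option linter.unusedSectionVars false
set_option maxHeartbeats 1000000

variable {ι : Type*} [DecidableEq ι]

noncomputable def esym (x : ι → ℝ) (F : Finset ι) (j : ℕ) : ℝ :=
  ∑ S ∈ F.powersetCard j, ∏ i ∈ S, x i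

lemma esym_zero (x : ι → ℝ) (F : Finset ι) : esym x F 0 = 1 := by
  simp [esym]

lemma esym_eq_zero_of_card_lt' (x : ι → ℝ) {F : Finset ι} {j : ℕ} (h : F.card < j) :
    esym x F j = 0 := by
  simp [esym, Finset.powersetCard_eq_empty.mpr h]

lemma esym_empty (x : ι → ℝ) (j : ℕ) (hj : j ≠ 0) : esym x (∅ : Finset ι) j = 0 :=
  esym_eq_zero_of_card_lt' x (by simpa using Nat.pos_of_ne_zero hj)

lemma esym_eq_zero_of_card_lt (x : ι → ℝ) {F : Finset ι} {j : ℕ} (h : F.card < j) :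
    esym x F j = 0 := by
  simp [esym, Finset.powersetCard_eq_empty.mpr h]

lemma esym_insert (x : ι → ℝ) {a : ι} {F : Finset ι} (ha : a ∉ F) (j : ℕ) :
    esym x (insert a F) (j + 1) = esym x F (j + 1) + x a * esym x F j := by
  have hinj : ∀ S ∈ F.powersetCard j, ∀ T ∈ F.powersetCard j,
      insert a S = insert a T → S = T := by
    intro S hS T hT hST
    have hSa : a ∉ S := fun hc => ha ((Finset.mem_powersetCard.mp hS).1 hc)
    have hTa : a ∉ T := fun hc => ha ((Finset.mem_powersetCard.mp hT).1 hc)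
    rw [← Finset.erase_insert hSa, hST, Finset.erase_insert hTa]
  have hdisj : Disjoint (F.powersetCard (j+1)) ((F.powersetCard j).image (insert a)) := by
    rw [Finset.disjoint_left]
    intro S hS hS'
    obtain ⟨T, hT, rfl⟩ := Finset.mem_image.mp hS'
    exact (fun hc => ha ((Finset.mem_powersetCard.mp hS).1 hc)) (Finset.mem_insert_self a T)
  simp only [esym]
  rw [Finset.powersetCard_succ_insert ha, Finset.sum_union hdisj, Finset.sum_image hinj,
    Finset.mul_sum]
  congr 1
  refine Finset.sum_congr rfl fun S hS => ?_
  rw [Finset.prod_insert fun hc => ha ((Finset.mem_powersetCard.mp hS).1 hc)]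

lemma esym_nonneg {x : ι → ℝ} {F : Finset ι} (hx : ∀ i ∈ F, 0 ≤ x i) (j : ℕ) :
    0 ≤ esym x F j := by
  refine Finset.sum_nonneg fun S hS => Finset.prod_nonneg fun i hi => ?_
  exact hx i ((Finset.mem_powersetCard.mp hS).1 hi)

lemma esym_pos {x : ι → ℝ} {F : Finset ι} (hx : ∀ i ∈ F, 0 < x i) {j : ℕ} (hj : j ≤ F.card) :
    0 < esym x F j := by
  obtain ⟨T, hT, hTcard⟩ := Finset.exists_subset_card_eq hj
  refine Finset.sum_pos (fun S hS => Finset.prod_pos fun i hi => hx i ((Finset.mem_powersetCard.mp hS).1 hi)) ?_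
  exact ⟨T, Finset.mem_powersetCard.mpr ⟨hT, hTcard⟩⟩

lemma esym_le_esym {x y : ι → ℝ} {F : Finset ι} (hx : ∀ i ∈ F, 0 ≤ x i)
    (hxy : ∀ i ∈ F, x i ≤ y i) (j : ℕ) : esym x F j ≤ esym y F j := by
  refine Finset.sum_le_sum fun S hS => Finset.prod_le_prod (fun i hi => hx i ((Finset.mem_powersetCard.mp hS).1 hi))
    (fun i hi => hxy i ((Finset.mem_powersetCard.mp hS).1 hi))

lemma esym_smul (c : ℝ) (x : ι → ℝ) (F : Finset ι) (j : ℕ) :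
    esym (fun i => c * x i) F j = c ^ j * esym x F j := by
  rw [esym, esym, Finset.mul_sum]
  refine Finset.sum_congr rfl fun S hS => ?_
  rw [Finset.prod_mul_distrib, Finset.prod_const, (Finset.mem_powersetCard.mp hS).2]

lemma esym_map {κ : Type*} [DecidableEq κ] (f : ι ↪ κ) (x : κ → ℝ) (F : Finset ι) (j : ℕ) :
    esym x (F.map f) j = esym (fun i => x (f i)) F j := by
  rw [esym, esym, Finset.powersetCard_map, Finset.sum_map]
  refine Finset.sum_congr rfl fun S hS => ?_
  rw [show ((Finset.mapEmbedding f).toEmbedding S) = S.map f from rfl, Finset.prod_map]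

theorem esym_newton (x y : ι → ℝ) :
    ∀ (F : Finset ι), (∀ i ∈ F, 0 ≤ x i) → (∀ i ∈ F, x i ≤ y i) →
    (∀ i j : ℕ, i ≤ j →
        esym x F (j+1) * esym y F i ≤ esym x F j * esym y F (i+1)) ∧
    (∀ a b : ℕ, a ≤ b → esym x F b * esym y F a ≤ esym x F a * esym y F b) := by
  intro F
  induction F using Finset.induction_on with
  | empty =>
    intro _ _
    constructor
    · intro i j hij
      rw [esym_eq_zero_of_card_lt' x (show (∅ : Finset ι).card < j + 1 by simp),
        esym_eq_zero_of_card_lt' y (show (∅ : Finset ι).card < i + 1 by simp)]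
      simp
    · intro a b hab
      rcases Nat.eq_zero_or_pos b with hb | hb
      · subst hb
        interval_cases a
        exact le_refl _
      · rw [esym_eq_zero_of_card_lt' x (show (∅ : Finset ι).card < b by simpa using hb),
          esym_eq_zero_of_card_lt' y (show (∅ : Finset ι).card < b by simpa using hb)]
        simp
  | @insert t F ht IH =>
    intro hx hxy
    have hx' : ∀ i ∈ F, 0 ≤ x i := fun i hi => hx i (mem_insert_of_mem hi)
    have hxy' : ∀ i ∈ F, x i ≤ y i := fun i hi => hxy i (mem_insert_of_mem hi)
    have hy' : ∀ i ∈ F, 0 ≤ y i := fun i hi => le_trans (hx' i hi) (hxy' i hi)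
    obtain ⟨MN, G⟩ := IH hx' hxy'
    set s := x t with hs_def
    set u := y t with hu_def
    have hs : 0 ≤ s := hx t (mem_insert_self t F)
    have hsu : s ≤ u := hxy t (mem_insert_self t F)
    have hu : 0 ≤ u := le_trans hs hsu
    set X : ℕ → ℝ := esym x F with hX
    set Y : ℕ → ℝ := esym y F with hY
    have Xn : ∀ j, 0 ≤ X j := fun j => esym_nonneg hx' j
    have Yn : ∀ j, 0 ≤ Y j := fun j => esym_nonneg hy' j
    have XY : ∀ j, X j ≤ Y j := fun j => esym_le_esym hx' hxy' j
    have EX : ∀ j : ℕ, esym x (insert t F) (j+1) = X (j+1) + s * X j := fun j => esym_insert x ht j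
    have EY : ∀ j : ℕ, esym y (insert t F) (j+1) = Y (j+1) + u * Y j := fun j => esym_insert y ht j
    have EX0 : esym x (insert t F) 0 = 1 := esym_zero x _
    have EY0 : esym y (insert t F) 0 = 1 := esym_zero y _
    have X0 : X 0 = 1 := esym_zero x F
    have Y0 : Y 0 = 1 := esym_zero y F
    constructor
    · -- MN part
      intro i j hij
      cases i with
      | zero =>
        cases j with
        | zero =>
          rw [EX 0, EY 0, EX0, EY0, X0, Y0]
          have := XY 1
          nlinarith
        | succ j' =>
          rw [EX (j'+1), EX j', EY 0, EY0, Y0]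
          have h1 : X (j'+2) * 1 ≤ X (j'+1) * Y 1 := by
            have := MN 0 (j'+1) (Nat.zero_le _); rwa [Y0] at this
          have h2 : s * X (j'+1) ≤ u * X (j'+1) := mul_le_mul_of_nonneg_right hsu (Xn _)
          have h3 : 0 ≤ s * X j' * Y 1 := mul_nonneg (mul_nonneg hs (Xn _)) (Yn _)
          have h4 : 0 ≤ s * u * X j' := mul_nonneg (mul_nonneg hs hu) (Xn _)
          have hXY1 : X (j'+1) * Y 1 = X (j'+1) * Y 1 := rfl
          nlinarith [XY (j'+1), Xn (j'+1), Yn 1]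
      | succ i' =>
        obtain ⟨j', rfl⟩ : ∃ j', j = j' + 1 := ⟨j - 1, by omega⟩
        have hij' : i' ≤ j' := by omega
        rw [EX (j'+1), EX j', EY (i'+1), EY i']
        rcases eq_or_lt_of_le hij' with heq | hlt
        · -- i' = j' =: p
          subst heq
          set p := i'
          have A1 : X (p+2) * Y (p+1) ≤ X (p+1) * Y (p+2) := MN (p+1) (p+1) le_rfl
          have A2 : X (p+2) * Y p ≤ X (p+1) * Y (p+1) := MN p (p+1) (by omega)
          have A3 : X (p+1) * Y p ≤ X p * Y (p+1) := MN p p le_rfl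
          have A4 : X (p+2) * Y p ≤ X p * Y (p+2) := G p (p+2) (by omega)
          have h1 : 0 ≤ (u - s) * (X (p+1) * Y (p+1) - X (p+2) * Y p) :=
            mul_nonneg (by linarith) (by linarith)
          have h2 : 0 ≤ s * (X p * Y (p+2) - X (p+2) * Y p) :=
            mul_nonneg hs (by linarith)
          have h3 : 0 ≤ (s*u) * (X p * Y (p+1) - X (p+1) * Y p) :=
            mul_nonneg (mul_nonneg hs hu) (by linarith)
          nlinarith [A1, h1, h2, h3]
        · -- i'+1 ≤ j'
          have hij2 : i' + 1 ≤ j' := hlt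
          have B1 : X (j'+2) * Y (i'+1) ≤ X (j'+1) * Y (i'+2) := MN (i'+1) (j'+1) (by omega)
          have B2 : X (j'+2) * Y i' ≤ X (j'+1) * Y (i'+1) := MN i' (j'+1) (by omega)
          have B3 : X (j'+1) * Y (i'+1) ≤ X j' * Y (i'+2) := MN (i'+1) j' hij2
          have B4 : X (j'+1) * Y i' ≤ X j' * Y (i'+1) := MN i' j' (by omega)
          have h2 : 0 ≤ u * (X (j'+1) * Y (i'+1) - X (j'+2) * Y i') := mul_nonneg hu (by linarith)
          have h3 : 0 ≤ s * (X j' * Y (i'+2) - X (j'+1) * Y (i'+1)) := mul_nonneg hs (by linarith)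
          have h4 : 0 ≤ (s*u) * (X j' * Y (i'+1) - X (j'+1) * Y i') :=
            mul_nonneg (mul_nonneg hs hu) (by linarith)
          nlinarith [B1, h2, h3, h4]
    · -- G part
      intro a b hab
      rcases eq_or_lt_of_le hab with rfl | hlt
      · exact le_refl _
      · obtain ⟨b', rfl⟩ : ∃ b', b = b' + 1 := ⟨b - 1, by omega⟩
        cases a with
        | zero =>
          rw [EX b', EY b', EX0, EY0]
          have h1 : X (b'+1) ≤ Y (b'+1) := XY _
          have h2 : s * X b' ≤ u * Y b' :=
            mul_le_mul hsu (XY b') (Xn b') hu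
          nlinarith
        | succ a' =>
          have hab' : a' + 1 ≤ b' := by omega
          rw [EX b', EX a', EY b', EY a']
          have C1 : X (b'+1) * Y (a'+1) ≤ X (a'+1) * Y (b'+1) := G (a'+1) (b'+1) (by omega)
          have C4 : X b' * Y a' ≤ X a' * Y b' := G a' b' (by omega)
          have C5 : X b' * Y (a'+1) ≤ X (a'+1) * Y b' := G (a'+1) b' hab'
          have C6 : X (b'+1) * Y a' ≤ X a' * Y (b'+1) := G a' (b'+1) (by omega)
          have C7 : X (b'+1) * Y a' ≤ X b' * Y (a'+1) := MN a' b' (by omega)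
          have t4 : 0 ≤ (s*u) * (X a' * Y b' - X b' * Y a') :=
            mul_nonneg (mul_nonneg hs hu) (by linarith)
          have t5 : 0 ≤ s * (X (a'+1) * Y b' - X b' * Y (a'+1)) := mul_nonneg hs (by linarith)
          have t6 : 0 ≤ s * (X a' * Y (b'+1) - X (b'+1) * Y a') := mul_nonneg hs (by linarith)
          have t7 : 0 ≤ (u - s) * (X (a'+1) * Y b' - X (b'+1) * Y a') :=
            mul_nonneg (by linarith) (by linarith)
          nlinarith [C1, t4, t5, t6, t7]

/-- The q-binomial identity for elementary symmetric functions of a geometric sequence. -/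
lemma egeo_identity (q : ℝ) :
    ∀ (N k : ℕ), esym (fun i : ℕ => q ^ (i+1)) (range N) (k+1) * (1 - q^(k+1))
      = esym (fun i : ℕ => q ^ (i+1)) (range N) k * (q^(k+1) * (1 - q^(N-k))) := by
  intro N
  induction N with
  | zero =>
    intro k
    rw [esym_eq_zero_of_card_lt' _ (by simp)]
    cases k with
    | zero => simp [esym_zero]
    | succ k => rw [esym_eq_zero_of_card_lt' _ (by simp)]; ring
  | succ N IH =>
    intro k
    by_cases hk : k ≤ N
    · have hNr : (N : ℕ) ∉ range N := by simp
      have hrg : range (N+1) = insert N (range N) := Finset.range_add_one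
      rw [hrg, esym_insert _ hNr]
      obtain ⟨d, rfl⟩ : ∃ d, N = k + d := ⟨N - k, by omega⟩
      have hsub1 : k + d + 1 - k = d + 1 := by omega
      have hsub2 : k + d - k = d := by omega
      rw [hsub1]
      cases k with
      | zero =>
        have IH0 := IH 0
        rw [hsub2] at IH0
        rw [esym_zero] at IH0
        rw [esym_zero, esym_zero]
        linear_combination IH0
      | succ k' =>
        rw [esym_insert _ hNr]
        have IH1 := IH (k'+1)
        have IH2 := IH k'
        have hs1 : k' + 1 + d - (k' + 1) = d := by omega
        have hs2 : k' + 1 + d - k' = d + 1 := by omega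
        rw [hs1] at IH1
        rw [hs2] at IH2
        linear_combination IH1 + q^(k'+d+3) * IH2
    · push_neg at hk
      rw [esym_eq_zero_of_card_lt' _ (by simp; omega)]
      rcases eq_or_lt_of_le (Nat.succ_le_of_lt hk) with heq | hlt
      · rw [← heq]
        simp
      · rw [esym_eq_zero_of_card_lt' _ (by simp; omega)]
        ring

lemma bernoulli_aux (δ : ℝ) (hδ0 : 0 ≤ δ) (hδ1 : δ ≤ 1) :
    ∀ m : ℕ, (1 + m * δ) * (1 - δ)^m ≤ 1 := by
  intro m
  induction m with
  | zero => simp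
  | succ m IH =>
    have hq : (0:ℝ) ≤ (1 - δ)^m := pow_nonneg (by linarith) m
    have t : 0 ≤ (1 - δ)^m * (((m:ℝ)+1) * δ * δ) := mul_nonneg hq (mul_nonneg (mul_nonneg
      (add_nonneg (Nat.cast_nonneg (α := ℝ) m) zero_le_one) hδ0) hδ0)
    push_cast
    rw [pow_succ]
    nlinarith [IH, t]

lemma geom_tail_sum (q : ℝ) (k : ℕ) :
    ∀ n : ℕ, k ≤ n → (1 - q) * (∑ i ∈ Finset.Ico k n, q^(i+1)) = q^(k+1) * (1 - q^(n-k)) := by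
  intro n
  induction n with
  | zero =>
    intro hk
    interval_cases k
    simp
  | succ n IH =>
    intro hk
    rcases eq_or_lt_of_le hk with heq | hlt
    · rw [← heq]
      simp
    · have hkn : k ≤ n := by omega
      rw [Finset.sum_Ico_succ_top hkn, mul_add, IH hkn]
      obtain ⟨d, rfl⟩ : ∃ d, n = k + d := ⟨n - k, by omega⟩
      have h1 : k + d - k = d := by omega
      have h2 : k + d + 1 - k = d + 1 := by omega
      rw [h1, h2]
      ring

/-- Sum over `Fin n` filtered by `k ≤ i` equals sum over `Ico k n`. -/
lemma fin_filter_sum (n k : ℕ) (f : ℕ → ℝ) :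
    ∑ i ∈ Finset.univ.filter (fun i : Fin n => k ≤ (i : ℕ)), f (i : ℕ)
      = ∑ i ∈ Finset.Ico k n, f i := by
  rw [Finset.sum_filter, Fin.sum_univ_eq_sum_range (fun i => if k ≤ i then f i else 0) n,
    ← Finset.sum_filter]
  congr 1
  ext i
  simp [Finset.mem_Ico, and_comm]

/-- The geometric-sequence bound: `(k+1) e_{k+1}(ν) ≤ 4 (1+δk) T e_k(ν)`. -/
lemma egeo_ratio (δ : ℝ) (hδ0 : 0 < δ) (hδ1 : δ < 1) (n k : ℕ) (hkn : k < n) :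
    ((k:ℝ)+1) * esym (fun i : ℕ => (1-δ) ^ (i+1)) (range n) (k+1)
      ≤ 4 * (1 + δ*k) * (∑ i ∈ Finset.Ico k n, (1-δ)^(i+1))
        * esym (fun i : ℕ => (1-δ) ^ (i+1)) (range n) k := by
  set q : ℝ := 1 - δ with hq_def
  have hq0 : 0 < q := by simp [hq_def]; linarith
  have hq1 : q < 1 := by simp [hq_def]; linarith
  set E : ℕ → ℝ := esym (fun i : ℕ => q ^ (i+1)) (range n) with hE
  set T : ℝ := ∑ i ∈ Finset.Ico k n, q^(i+1) with hT
  have hTnn : 0 ≤ T := Finset.sum_nonneg fun i _ => pow_nonneg hq0.le _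
  have hEk_nn : 0 ≤ E k := esym_nonneg (fun i _ => pow_nonneg hq0.le _) k
  have hEk1_nn : 0 ≤ E (k+1) := esym_nonneg (fun i _ => pow_nonneg hq0.le _) (k+1)
  have hqk1_lt : q^(k+1) < 1 := pow_lt_one₀ hq0.le hq1 (by omega)
  have hqk1_pos : 0 < 1 - q^(k+1) := by linarith
  have hQ : E (k+1) * (1 - q^(k+1)) = E k * (q^(k+1) * (1 - q^(n-k))) := egeo_identity q n k
  have hTid : (1 - q) * T = q^(k+1) * (1 - q^(n-k)) := geom_tail_sum q k n hkn.le
  -- Bernoulli: (1 + (k+1) δ) * q^(k+1) ≤ 1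
  have hbern : (1 + ((k:ℝ)+1) * δ) * q^(k+1) ≤ 1 := by
    have := bernoulli_aux δ hδ0.le hδ1.le (k+1)
    push_cast at this
    convert this using 2 <;> push_cast <;> ring
  -- (k+1) δ ≤ 4 (1+δk) (1 - q^(k+1))
  have hkey : ((k:ℝ)+1) * δ ≤ 4 * (1 + δ*k) * (1 - q^(k+1)) := by
    have h1 : ((k:ℝ)+1) * δ ≤ (1 + ((k:ℝ)+1) * δ) * (1 - q^(k+1)) := by nlinarith
    have h2 : (1 + ((k:ℝ)+1) * δ) ≤ 4 * (1 + δ*k) := by nlinarith [Nat.cast_nonneg (α := ℝ) k]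
    calc ((k:ℝ)+1) * δ ≤ (1 + ((k:ℝ)+1) * δ) * (1 - q^(k+1)) := h1
      _ ≤ 4 * (1 + δ*k) * (1 - q^(k+1)) :=
        mul_le_mul_of_nonneg_right h2 hqk1_pos.le
  -- combine: multiply target by (1 - q^(k+1)) > 0
  rw [← mul_le_mul_iff_of_pos_right hqk1_pos]
  calc ((k:ℝ)+1) * E (k+1) * (1 - q^(k+1)) = ((k:ℝ)+1) * (E (k+1) * (1 - q^(k+1))) := by ring
    _ = ((k:ℝ)+1) * (E k * ((1-q) * T)) := by rw [hQ, hTid]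
    _ = (((k:ℝ)+1) * δ) * (T * E k) := by rw [hq_def]; ring
    _ ≤ (4 * (1 + δ*k) * (1 - q^(k+1))) * (T * E k) :=
        mul_le_mul_of_nonneg_right hkey (mul_nonneg hTnn hEk_nn)
    _ = 4 * (1 + δ*k) * T * E k * (1 - q^(k+1)) := by ring

/-- Master analytic bound. -/
theorem esym_ratio_bound {n : ℕ} (lam : Fin n → ℝ) (δ c₁ c₂ : ℝ) (hδ0 : 0 < δ) (hδ1 : δ < 1)
    (hc₁ : 0 < c₁) (hc12 : c₁ ≤ c₂)
    (hband : ∀ i : Fin n, c₁ * (1-δ)^((i:ℕ)+1) ≤ lam i ∧ lam i ≤ c₂ * (1-δ)^((i:ℕ)+1))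
    (k : ℕ) (hkn : k < n) :
    ((k:ℝ)+1) * esym lam Finset.univ (k+1) ≤
      4 * (c₂/c₁) * (1 + δ*(k:ℝ))
        * (∑ i ∈ Finset.univ.filter (fun i : Fin n => k ≤ (i : ℕ)), lam i)
        * esym lam Finset.univ k := by
  set q : ℝ := 1 - δ with hq_def
  have hq0 : 0 < q := by simp [hq_def]; linarith
  have hc₂ : 0 < c₂ := lt_of_lt_of_le hc₁ hc12
  set ν : Fin n → ℝ := fun i => q ^ ((i:ℕ)+1) with hν
  set y : Fin n → ℝ := fun i => c₂ * ν i with hy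
  set L : ℕ → ℝ := esym lam Finset.univ with hL
  set Eν : ℕ → ℝ := esym ν Finset.univ with hEν
  have hlam_pos : ∀ i : Fin n, 0 < lam i := fun i =>
    lt_of_lt_of_le (by positivity) (hband i).1
  have hlam_nn : ∀ i ∈ Finset.univ, 0 ≤ lam i := fun i _ => (hlam_pos i).le
  have hlam_le : ∀ i ∈ Finset.univ, lam i ≤ y i := fun i _ => (hband i).2
  -- MN inequality
  have hMN := (esym_newton lam y Finset.univ hlam_nn hlam_le).1 k k le_rfl
  have hEy : ∀ j, esym y Finset.univ j = c₂^j * Eν j := fun j => esym_smul c₂ ν Finset.univ j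
  have hEν_pos : ∀ j, j ≤ n → 0 < Eν j := by
    intro j hj
    refine esym_pos (fun i _ => by positivity) ?_
    simpa using hj
  have hEν_nn : ∀ j, 0 ≤ Eν j := fun j => esym_nonneg (fun i _ => by positivity) j
  -- transfer to ℕ and apply egeo_ratio
  have htrans : ∀ j, Eν j = esym (fun i : ℕ => q ^ (i+1)) (range n) j := by
    intro j
    have h1 : (Finset.univ : Finset (Fin n)).map Fin.valEmbedding = range n := by
      rw [Fin.map_valEmbedding_univ]
      ext i; simp
    rw [hEν, ← h1, esym_map]
    rfl
  set T : ℝ := ∑ i ∈ Finset.Ico k n, q^(i+1) with hT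
  have hgeo : ((k:ℝ)+1) * Eν (k+1) ≤ 4 * (1 + δ*k) * T * Eν k := by
    rw [htrans (k+1), htrans k]
    exact egeo_ratio δ hδ0 hδ1 n k hkn
  -- tail sum comparison
  set R : ℝ := ∑ i ∈ Finset.univ.filter (fun i : Fin n => k ≤ (i : ℕ)), lam i with hR
  have hc₁T : c₁ * T ≤ R := by
    have : ∑ i ∈ Finset.univ.filter (fun i : Fin n => k ≤ (i : ℕ)), c₁ * q^((i:ℕ)+1)
        = c₁ * T := by
      rw [hT, Finset.mul_sum, ← fin_filter_sum n k (fun i => c₁ * q^(i+1))]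
    rw [← this, hR]
    exact Finset.sum_le_sum fun i _ => (hband i).1
  have hTnn : 0 ≤ T := Finset.sum_nonneg fun i _ => pow_nonneg hq0.le _
  have hRnn : 0 ≤ R := Finset.sum_nonneg fun i hi => (hlam_pos i).le
  have hLk_nn : 0 ≤ L k := esym_nonneg hlam_nn k
  have hδk : (0:ℝ) ≤ 1 + δ*k := by positivity
  -- main chain
  have hEνk_pos : 0 < Eν k := hEν_pos k hkn.le
  have hMN' : L (k+1) * (c₂^k * Eν k) ≤ L k * (c₂^(k+1) * Eν (k+1)) := by
    have := hMN
    rw [hEy k, hEy (k+1)] at this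
    exact this
  have A : (((k:ℝ)+1) * L (k+1)) * (c₂^k * Eν k)
      ≤ (4 * (1 + δ*(k:ℝ)) * (c₂ * T) * L k) * (c₂^k * Eν k) := by
    have s1 : (((k:ℝ)+1) * L (k+1)) * (c₂^k * Eν k)
        ≤ ((k:ℝ)+1) * (L k * (c₂^(k+1) * Eν (k+1))) := by
      have := mul_le_mul_of_nonneg_left hMN' (show (0:ℝ) ≤ (k:ℝ)+1 by positivity)
      calc (((k:ℝ)+1) * L (k+1)) * (c₂^k * Eν k)
          = ((k:ℝ)+1) * (L (k+1) * (c₂^k * Eν k)) := by ring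
        _ ≤ ((k:ℝ)+1) * (L k * (c₂^(k+1) * Eν (k+1))) := this
    have s2 : (L k * c₂^(k+1)) * (((k:ℝ)+1) * Eν (k+1))
        ≤ (L k * c₂^(k+1)) * (4 * (1 + δ*(k:ℝ)) * T * Eν k) :=
      mul_le_mul_of_nonneg_left hgeo (mul_nonneg hLk_nn (by positivity))
    calc (((k:ℝ)+1) * L (k+1)) * (c₂^k * Eν k)
        ≤ ((k:ℝ)+1) * (L k * (c₂^(k+1) * Eν (k+1))) := s1
      _ = (L k * c₂^(k+1)) * (((k:ℝ)+1) * Eν (k+1)) := by ring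
      _ ≤ (L k * c₂^(k+1)) * (4 * (1 + δ*(k:ℝ)) * T * Eν k) := s2
      _ = (4 * (1 + δ*(k:ℝ)) * (c₂ * T) * L k) * (c₂^k * Eν k) := by ring
  have main1 : ((k:ℝ)+1) * L (k+1) ≤ 4 * (1 + δ*(k:ℝ)) * (c₂ * T) * L k :=
    le_of_mul_le_mul_right A (by positivity)
  have hc2T : c₂ * T ≤ (c₂/c₁) * R := by
    have he : c₂ * T = (c₂/c₁) * (c₁ * T) := by field_simp
    rw [he]
    exact mul_le_mul_of_nonneg_left hc₁T (by positivity)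
  calc ((k:ℝ)+1) * L (k+1) ≤ 4 * (1 + δ*(k:ℝ)) * (c₂ * T) * L k := main1
    _ = (c₂ * T) * (4 * (1 + δ*(k:ℝ)) * L k) := by ring
    _ ≤ ((c₂/c₁) * R) * (4 * (1 + δ*(k:ℝ)) * L k) := by
        refine mul_le_mul_of_nonneg_right hc2T ?_
        positivity
    _ = 4 * (c₂/c₁) * (1 + δ*(k:ℝ)) * R * L k := by ring

section DetExpand

variable {R : Type*} [CommRing R] {κ : Type*} [Fintype κ] [DecidableEq κ]

lemma det_piecewise (M : Matrix κ κ R) (S : Finset κ) :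
    (Matrix.of (S.piecewise (fun i => M i) (fun i => (1 : Matrix κ κ R) i))).det
      = (M.submatrix (fun i : {x // x ∈ S} => (i : κ)) (fun i : {x // x ∈ S} => (i : κ))).det := by
  classical
  set N : Matrix κ κ R := Matrix.of (S.piecewise (fun i => M i) (fun i => (1 : Matrix κ κ R) i))
    with hN
  rw [← Matrix.det_submatrix_equiv_self (Equiv.sumCompl (· ∈ S)) N]
  have hblocks : N.submatrix (Equiv.sumCompl (· ∈ S)) (Equiv.sumCompl (· ∈ S))
      = Matrix.fromBlocks
      (M.submatrix (fun i : {x // x ∈ S} => (i : κ)) (fun i : {x // x ∈ S} => (i : κ)))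
      (M.submatrix (fun i : {x // x ∈ S} => (i : κ)) (fun i : {x // ¬ x ∈ S} => (i : κ)))
      0 (1 : Matrix {x // ¬ x ∈ S} {x // ¬ x ∈ S} R) := by
    ext i j
    cases i with
    | inl i =>
      cases j with
      | inl j =>
        simp only [Matrix.submatrix_apply, Matrix.fromBlocks_apply₁₁,
          Equiv.sumCompl_apply_inl, hN, Matrix.of_apply, Finset.piecewise, if_pos i.2]
      | inr j =>
        simp only [Matrix.submatrix_apply, Matrix.fromBlocks_apply₁₂,
          Equiv.sumCompl_apply_inl, Equiv.sumCompl_apply_inr, hN, Matrix.of_apply,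
          Finset.piecewise, if_pos i.2]
    | inr i =>
      cases j with
      | inl j =>
        have hne : (i : κ) ≠ (j : κ) := fun hc => i.2 (hc ▸ j.2)
        simp only [Matrix.submatrix_apply, Matrix.fromBlocks_apply₂₁, Matrix.zero_apply,
          Equiv.sumCompl_apply_inl, Equiv.sumCompl_apply_inr, hN, Matrix.of_apply,
          Finset.piecewise, if_neg i.2]
        exact Matrix.one_apply_ne hne
      | inr j =>
        simp only [Matrix.submatrix_apply, Matrix.fromBlocks_apply₂₂,
          Equiv.sumCompl_apply_inr, hN, Matrix.of_apply, Finset.piecewise, if_neg i.2]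
        by_cases hij : i = j
        · subst hij; simp [Matrix.one_apply_eq]
        · have hne : (i : κ) ≠ (j : κ) := fun hc => hij (Subtype.ext hc)
          rw [Matrix.one_apply_ne hne, Matrix.one_apply_ne hij]
  rw [hblocks, Matrix.det_fromBlocks_zero₂₁, Matrix.det_one, mul_one]

theorem det_one_add_expand (M : Matrix κ κ R) :
    (1 + M).det = ∑ S : Finset κ,
      (M.submatrix (fun i : {x // x ∈ S} => (i : κ)) (fun i : {x // x ∈ S} => (i : κ))).det := by
  classical
  have key := (Matrix.detRowAlternating (n := κ) (R := R)).toMultilinearMap.map_add_univ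
      (fun i => M i) (fun i => (1 : Matrix κ κ R) i)
  have hof : (1 : Matrix κ κ R) + M
      = Matrix.of ((fun i => M i) + fun i => (1 : Matrix κ κ R) i) := by
    ext i j
    simp [Matrix.add_apply, add_comm]
  rw [hof]
  calc (Matrix.of ((fun i => M i) + fun i => (1 : Matrix κ κ R) i)).det
      = ∑ s : Finset κ,
        Matrix.detRowAlternating (s.piecewise (fun i => M i) fun i => (1 : Matrix κ κ R) i) :=
        key
    _ = ∑ S : Finset κ,
        (M.submatrix (fun i : {x // x ∈ S} => (i : κ)) (fun i : {x // x ∈ S} => (i : κ))).det :=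
        Finset.sum_congr rfl fun S _ => det_piecewise M S

end DetExpand

lemma coeff_prod_one_add (x : ι → ℝ) (F : Finset ι) :
    ∀ j : ℕ, (∏ i ∈ F, (1 + Polynomial.C (x i) * Polynomial.X)).coeff j = esym x F j := by
  induction F using Finset.induction_on with
  | empty =>
    intro j
    rw [Finset.prod_empty]
    cases j with
    | zero => simp [esym_zero]
    | succ j =>
      rw [Polynomial.coeff_one, esym_eq_zero_of_card_lt' x (by simp)]
      simp
  | @insert t F ht IH =>
    intro j
    rw [Finset.prod_insert ht]
    have hre : (1 + Polynomial.C (x t) * Polynomial.X) * (∏ i ∈ F, (1 + Polynomial.C (x i) * Polynomial.X))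
        = (∏ i ∈ F, (1 + Polynomial.C (x i) * Polynomial.X))
          + Polynomial.C (x t) * (Polynomial.X * ∏ i ∈ F, (1 + Polynomial.C (x i) * Polynomial.X)) := by
      ring
    rw [hre, Polynomial.coeff_add, Polynomial.coeff_C_mul]
    cases j with
    | zero =>
      rw [Polynomial.mul_coeff_zero, Polynomial.coeff_X_zero, zero_mul, mul_zero, add_zero,
        IH 0, esym_zero, esym_zero]
    | succ j =>
      rw [Polynomial.coeff_X_mul, IH (j+1), IH j, esym_insert x ht j]

theorem pdet_sum_eq_esym {n : ℕ} (K : Matrix (Fin n) (Fin n) ℝ) (hK : K.IsHermitian) (j : ℕ) :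
    ∑ S ∈ Finset.univ.filter (fun S : Finset (Fin n) => S.card = j), pdet K S
      = esym hK.eigenvalues Finset.univ j := by
  classical
  set μ : Fin n → ℝ := hK.eigenvalues with hμ
  set P₁ : Polynomial ℝ := ∑ S : Finset (Fin n), Polynomial.C (pdet K S) * Polynomial.X ^ S.card
    with hP₁
  set P₂ : Polynomial ℝ := ∏ i : Fin n, (1 + Polynomial.C (μ i) * Polynomial.X) with hP₂
  have hU : (hK.eigenvectorUnitary : Matrix (Fin n) (Fin n) ℝ)
      * star (hK.eigenvectorUnitary : Matrix (Fin n) (Fin n) ℝ) = 1 :=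
    Matrix.mem_unitaryGroup_iff.mp (hK.eigenvectorUnitary).2
  have hspec : K = (hK.eigenvectorUnitary : Matrix (Fin n) (Fin n) ℝ)
      * Matrix.diagonal μ * star (hK.eigenvectorUnitary : Matrix (Fin n) (Fin n) ℝ) := by
    have := hK.spectral_theorem
    simpa [RCLike.ofReal_real_eq_id] using this
  have heval : ∀ t : ℝ, P₁.eval t = P₂.eval t := by
    intro t
    have h1 : P₁.eval t = (1 + t • K).det := by
      rw [hP₁, det_one_add_expand (t • K)]
      rw [Polynomial.eval_finset_sum]
      refine Finset.sum_congr rfl fun S _ => ?_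
      have hsub : ((t • K).submatrix (fun i : {x : Fin n // x ∈ S} => (i : Fin n))
          (fun i : {x : Fin n // x ∈ S} => (i : Fin n)))
          = t • (K.submatrix (fun i : {x : Fin n // x ∈ S} => (i : Fin n))
          (fun i : {x : Fin n // x ∈ S} => (i : Fin n))) := by
        ext a b
        simp [Matrix.submatrix_apply, Matrix.smul_apply]
      rw [hsub, Matrix.det_smul, Fintype.card_coe]
      simp [pdet]
      ring
    have h2 : P₂.eval t = (1 + t • K).det := by
      set U : Matrix (Fin n) (Fin n) ℝ := (hK.eigenvectorUnitary : Matrix (Fin n) (Fin n) ℝ)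
        with hUdef
      have hfact : 1 + t • K = U * (1 + t • Matrix.diagonal μ) * star U := by
        rw [Matrix.mul_add, Matrix.add_mul, Matrix.mul_one, hU, Matrix.mul_smul,
          Matrix.smul_mul, ← hspec]
      rw [hfact, Matrix.det_mul, Matrix.det_mul]
      have : U.det * (1 + t • Matrix.diagonal μ).det * (star U).det
          = (1 + t • Matrix.diagonal μ).det * (U * star U).det := by
        rw [Matrix.det_mul]; ring
      rw [this, hU, Matrix.det_one, mul_one]
      have hdiag : 1 + t • Matrix.diagonal μ = Matrix.diagonal (fun i => 1 + t * μ i) := by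
        rw [← Matrix.diagonal_one, ← Matrix.diagonal_smul, Matrix.diagonal_add]
        rfl
      rw [hdiag, Matrix.det_diagonal, hP₂, Polynomial.eval_prod]
      refine Finset.prod_congr rfl fun i _ => ?_
      rw [Polynomial.eval_add, Polynomial.eval_one, Polynomial.eval_mul, Polynomial.eval_C,
        Polynomial.eval_X, mul_comm]
    rw [h1, h2]
  have hPP : P₁ = P₂ := Polynomial.funext heval
  have hc1 : P₁.coeff j = ∑ S ∈ Finset.univ.filter (fun S : Finset (Fin n) => S.card = j),
      pdet K S := by
    rw [hP₁, Polynomial.finset_sum_coeff]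
    rw [Finset.sum_filter]
    refine Finset.sum_congr rfl fun S _ => ?_
    rw [Polynomial.coeff_C_mul, Polynomial.coeff_X_pow]
    by_cases h : S.card = j
    · simp [h]
    · simp [h, Ne.symm h]
  have hc2 : P₂.coeff j = esym μ Finset.univ j := coeff_prod_one_add μ Finset.univ j
  rw [← hc1, hPP, hc2]

lemma esym_perm {n : ℕ} (x : Fin n → ℝ) (σ : Equiv.Perm (Fin n)) (j : ℕ) :
    esym (fun i => x (σ i)) Finset.univ j = esym x Finset.univ j := by
  have h := esym_map σ.toEmbedding x Finset.univ j
  rw [Finset.map_univ_equiv] at h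
  exact h.symm

noncomputable def gmat {κ : Type*} (v : κ → EuclideanSpace ℝ (Fin m)) : Matrix κ κ ℝ :=
  Matrix.of fun a b => (inner ℝ (v a) (v b) : ℝ)

theorem gram_det_step {κ : Type*} [Fintype κ] [DecidableEq κ]
    (v : κ → EuclideanSpace ℝ (Fin m)) (w : EuclideanSpace ℝ (Fin m)) :
    (gmat (Sum.elim v (fun _ : Unit => w))).det
      = (gmat v).det *
        ‖w - (Submodule.orthogonalProjectionOnto (Submodule.span ℝ (Set.range v)) w :
          EuclideanSpace ℝ (Fin m))‖^2 := by
  classical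
  set W := Submodule.span ℝ (Set.range v) with hW
  set p : EuclideanSpace ℝ (Fin m) := (Submodule.orthogonalProjectionOnto W w : EuclideanSpace ℝ (Fin m))
    with hp
  set r : EuclideanSpace ℝ (Fin m) := w - p with hr
  have hpW : p ∈ W := (Submodule.orthogonalProjectionOnto W w).2
  obtain ⟨c, hc⟩ := (Submodule.mem_span_range_iff_exists_fun ℝ).mp hpW
  have hrth : r ∈ Wᗮ := Submodule.sub_starProjection_mem_orthogonal w
  have hva : ∀ a : κ, v a ∈ W := fun a => Submodule.subset_span ⟨a, rfl⟩
  have hinner_r : ∀ a : κ, (inner ℝ (v a) r : ℝ) = 0 := fun a =>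
    (Submodule.mem_orthogonal W r).mp hrth (v a) (hva a)
  have hinner_pr : (inner ℝ p r : ℝ) = 0 := (Submodule.mem_orthogonal W r).mp hrth p hpW
  have hinner_wr : (inner ℝ w r : ℝ) = ‖r‖^2 := by
    have hw : w = p + r := by rw [hr]; abel
    calc (inner ℝ w r : ℝ) = inner ℝ (p + r) r := by rw [← hw]
      _ = (inner ℝ p r : ℝ) + inner ℝ r r := inner_add_left p r r
      _ = ‖r‖^2 := by rw [hinner_pr, zero_add, real_inner_self_eq_norm_sq]
  set M : Matrix (κ ⊕ Unit) (κ ⊕ Unit) ℝ := gmat (Sum.elim v (fun _ : Unit => w)) with hM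
  -- row elimination
  set s : Finset (κ ⊕ Unit) :=
    (Finset.univ : Finset κ).map ⟨Sum.inl, Sum.inl_injective⟩ with hs
  have hjs : (Sum.inr () : κ ⊕ Unit) ∉ s := by simp [hs]
  set c' : κ ⊕ Unit → ℝ := Sum.elim (fun a => -(c a)) (fun _ => 0) with hc'
  have key := Matrix.det_updateRow_sum_aux M s hjs c' 1
  rw [one_smul, one_smul] at key
  -- identify the new row
  have hrow : (M (Sum.inr ()) + ∑ k ∈ s, c' k • M k)
      = fun z => M (Sum.inr ()) z - ∑ a : κ, c a * M (Sum.inl a) z := by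
    funext z
    rw [hs, Finset.sum_map]
    simp only [Pi.add_apply, Finset.sum_apply, Pi.smul_apply, smul_eq_mul,
      Function.Embedding.coeFn_mk, hc', Sum.elim_inl]
    rw [sub_eq_add_neg, ← Finset.sum_neg_distrib]
    congr 1
    refine Finset.sum_congr rfl fun a _ => by ring
  rw [hrow] at key
  set N := M.updateRow (Sum.inr ())
    (fun z => M (Sum.inr ()) z - ∑ a : κ, c a * M (Sum.inl a) z) with hN
  -- N in block form
  have hNb : N = Matrix.fromBlocks (gmat v) (Matrix.of fun a (_ : Unit) => (inner ℝ (v a) w : ℝ))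
      0 (Matrix.of fun (_ : Unit) (_ : Unit) => ‖r‖^2) := by
    ext z y
    cases z with
    | inl a =>
      have hne : (Sum.inl a : κ ⊕ Unit) ≠ Sum.inr () := by simp
      rw [hN, Matrix.updateRow_ne hne]
      cases y with
      | inl b => simp [hM, gmat]
      | inr u => simp [hM, gmat]
    | inr u =>
      rw [hN]
      cases u
      rw [Matrix.updateRow_self]
      cases y with
      | inl b =>
        have h1 : M (Sum.inr ()) (Sum.inl b) = (inner ℝ w (v b) : ℝ) := by simp [hM, gmat]
        have h2 : ∀ a, M (Sum.inl a) (Sum.inl b) = (inner ℝ (v a) (v b) : ℝ) := by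
          intro a; simp [hM, gmat]
        simp only [h1, h2]
        have : (∑ a : κ, c a * (inner ℝ (v a) (v b) : ℝ)) = (inner ℝ p (v b) : ℝ) := by
          rw [← hc]
          rw [sum_inner]
          refine Finset.sum_congr rfl fun a _ => ?_
          rw [real_inner_smul_left]
        rw [this]
        have : (inner ℝ w (v b) : ℝ) - inner ℝ p (v b) = inner ℝ r (v b) := by
          rw [hr, inner_sub_left]
        rw [this]
        have : (inner ℝ r (v b) : ℝ) = 0 := by rw [real_inner_comm]; exact hinner_r b
        rw [this]
        simp [Matrix.fromBlocks_apply₂₁]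
      | inr u' =>
        cases u'
        have h1 : M (Sum.inr ()) (Sum.inr ()) = (inner ℝ w w : ℝ) := by simp [hM, gmat]
        have h2 : ∀ a, M (Sum.inl a) (Sum.inr ()) = (inner ℝ (v a) w : ℝ) := by
          intro a; simp [hM, gmat]
        simp only [h1, h2]
        have : (∑ a : κ, c a * (inner ℝ (v a) w : ℝ)) = (inner ℝ p w : ℝ) := by
          rw [← hc, sum_inner]
          refine Finset.sum_congr rfl fun a _ => ?_
          rw [real_inner_smul_left]
        rw [this]
        have : (inner ℝ w w : ℝ) - inner ℝ p w = inner ℝ r w := by rw [hr, inner_sub_left]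
        rw [this]
        have : (inner ℝ r w : ℝ) = ‖r‖^2 := by rw [real_inner_comm]; exact hinner_wr
        rw [this]
        simp [Matrix.fromBlocks_apply₂₂]
  have hdet : N.det = (gmat v).det * ‖r‖^2 := by
    rw [hNb, Matrix.det_fromBlocks_zero₂₁]
    congr 1
    rw [Matrix.det_unique]
    rfl
  rw [← key, hdet]

lemma K_inner (A : Matrix (Fin m) (Fin n) ℝ) (x y : Fin n) :
    (Aᵀ * A) x y = (inner ℝ (col A x) (col A y) : ℝ) := by
  rw [Matrix.mul_apply, PiLp.inner_apply]
  refine Finset.sum_congr rfl fun i _ => ?_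
  simp [col, Matrix.transpose_apply, RCLike.inner_apply]
  ring

lemma span_range_eq (A : Matrix (Fin m) (Fin n) ℝ) (S : Finset (Fin n)) :
    Submodule.span ℝ (Set.range (fun a : {x : Fin n // x ∈ S} => col A (a : Fin n)))
      = colSpan A S := by
  rw [colSpan]
  congr 1
  ext x
  constructor
  · rintro ⟨⟨i, hi⟩, rfl⟩
    exact ⟨i, hi, rfl⟩
  · rintro ⟨i, hi, rfl⟩
    exact ⟨⟨i, hi⟩, rfl⟩

lemma pdet_eq_gram (A : Matrix (Fin m) (Fin n) ℝ) (S : Finset (Fin n)) :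
    pdet (Aᵀ * A) S = (gmat (fun a : {x : Fin n // x ∈ S} => col A (a : Fin n))).det := by
  rw [pdet]
  congr 1
  ext a b
  exact K_inner A a b

theorem pdet_insert (A : Matrix (Fin m) (Fin n) ℝ) {S : Finset (Fin n)} {j : Fin n}
    (hj : j ∉ S) :
    pdet (Aᵀ * A) (insert j S) = pdet (Aᵀ * A) S *
      ‖col A j - (Submodule.orthogonalProjectionOnto (colSpan A S) (col A j) :
        EuclideanSpace ℝ (Fin m))‖^2 := by
  classical
  set v : {x : Fin n // x ∈ S} → EuclideanSpace ℝ (Fin m) := fun a => col A (a : Fin n) with hv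
  let e : ({x : Fin n // x ∈ S} ⊕ Unit) ≃ {x : Fin n // x ∈ insert j S} :=
  { toFun := Sum.elim (fun a => ⟨a, Finset.mem_insert_of_mem a.2⟩)
      (fun _ => ⟨j, Finset.mem_insert_self j S⟩)
    invFun := fun z => if h : (z : Fin n) ∈ S then Sum.inl ⟨z, h⟩ else Sum.inr ()
    left_inv := by
      rintro (a | u)
      · simp [a.2]
      · simp [hj]
    right_inv := by
      rintro ⟨z, hz⟩
      rcases Finset.mem_insert.mp hz with rfl | h
      · simp [hj]
      · simp [h] }
  have h1 : pdet (Aᵀ * A) (insert j S)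
      = (gmat (Sum.elim v (fun _ : Unit => col A j))).det := by
    rw [pdet, ← Matrix.det_submatrix_equiv_self e]
    congr 1
    ext z y
    rw [Matrix.submatrix_apply, Matrix.submatrix_apply, K_inner]
    have hz : col A ((e z : {x : Fin n // x ∈ insert j S}) : Fin n)
        = Sum.elim v (fun _ : Unit => col A j) z := by cases z <;> rfl
    have hy : col A ((e y : {x : Fin n // x ∈ insert j S}) : Fin n)
        = Sum.elim v (fun _ : Unit => col A j) y := by cases y <;> rfl
    rw [hz, hy]
    rfl
  rw [h1, gram_det_step, pdet_eq_gram, span_range_eq]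

lemma dist_sq_zero_of_mem (A : Matrix (Fin m) (Fin n) ℝ) {S : Finset (Fin n)} {j : Fin n}
    (hj : j ∈ S) :
    ‖col A j - (Submodule.orthogonalProjectionOnto (colSpan A S) (col A j) :
      EuclideanSpace ℝ (Fin m))‖^2 = 0 := by
  have hmem : col A j ∈ colSpan A S := Submodule.subset_span ⟨j, hj, rfl⟩
  rw [show ((colSpan A S).orthogonalProjectionOnto (col A j) : EuclideanSpace ℝ (Fin m)) = col A j from
    (Submodule.starProjection_eq_self_iff (K := colSpan A S)).mpr hmem, sub_self, norm_zero]
  norm_num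

lemma pdet_mul_Er (A : Matrix (Fin m) (Fin n) ℝ) (S : Finset (Fin n)) :
    pdet (Aᵀ * A) S * Er A S = ∑ j ∈ Sᶜ, pdet (Aᵀ * A) (insert j S) := by
  classical
  rw [Er, Finset.mul_sum]
  rw [← Finset.sum_compl_add_sum S
    (fun j => pdet (Aᵀ * A) S *
      ‖col A j - (Submodule.orthogonalProjectionOnto (colSpan A S) (col A j) :
        EuclideanSpace ℝ (Fin m))‖ ^ 2)]
  have h2 : ∑ j ∈ S, pdet (Aᵀ * A) S *
      ‖col A j - (Submodule.orthogonalProjectionOnto (colSpan A S) (col A j) :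
        EuclideanSpace ℝ (Fin m))‖ ^ 2 = 0 := by
    refine Finset.sum_eq_zero fun j hj => ?_
    rw [dist_sq_zero_of_mem A hj, mul_zero]
  rw [h2, add_zero]
  refine Finset.sum_congr rfl fun j hj => ?_
  rw [← pdet_insert A (Finset.mem_compl.mp hj)]

lemma insert_pairing (k : ℕ) (f : Finset (Fin n) → ℝ) :
    ∑ S ∈ Finset.univ.filter (fun S : Finset (Fin n) => S.card = k), ∑ j ∈ Sᶜ, f (insert j S)
      = ((k:ℝ)+1) * ∑ T ∈ Finset.univ.filter (fun T : Finset (Fin n) => T.card = k+1), f T := by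
  classical
  rw [Finset.mul_sum]
  have hR : ∀ T ∈ Finset.univ.filter (fun T : Finset (Fin n) => T.card = k+1),
      ((k:ℝ)+1) * f T = ∑ j ∈ T, f T := by
    intro T hT
    rw [Finset.sum_const, (Finset.mem_filter.mp hT).2]
    push_cast
    ring
  rw [Finset.sum_congr rfl hR]
  rw [Finset.sum_sigma', Finset.sum_sigma']
  refine Finset.sum_nbij' (fun p => ⟨insert p.2 p.1, p.2⟩) (fun p => ⟨p.1.erase p.2, p.2⟩)
    ?_ ?_ ?_ ?_ ?_
  · rintro ⟨S, j⟩ hp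
    simp only [Finset.mem_sigma, Finset.mem_filter, Finset.mem_univ, true_and] at hp ⊢
    obtain ⟨hcard, hj⟩ := hp
    have hjS : j ∉ S := Finset.mem_compl.mp hj
    exact ⟨by rw [Finset.card_insert_of_notMem hjS, hcard], Finset.mem_insert_self j S⟩
  · rintro ⟨T, j⟩ hp
    simp only [Finset.mem_sigma, Finset.mem_filter, Finset.mem_univ, true_and] at hp ⊢
    obtain ⟨hcard, hj⟩ := hp
    constructor
    · rw [Finset.card_erase_of_mem hj, hcard]
      omega
    · simp
  · rintro ⟨S, j⟩ hp
    simp only [Finset.mem_sigma, Finset.mem_filter, Finset.mem_univ, true_and] at hp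
    obtain ⟨hcard, hj⟩ := hp
    have hjS : j ∉ S := Finset.mem_compl.mp hj
    simp [Finset.erase_insert hjS]
  · rintro ⟨T, j⟩ hp
    simp only [Finset.mem_sigma, Finset.mem_filter, Finset.mem_univ, true_and] at hp
    obtain ⟨hcard, hj⟩ := hp
    simp [Finset.insert_erase hj]
  · rintro ⟨S, j⟩ hp
    rfl


end Auxiliary

set_option maxHeartbeats 1000000 in
/-- Improved approximation factor under exponential spectral decay:
if `c₁·(1−δ)^i ≤ λ_i ≤ c₂·(1−δ)^i` with `δ ∈ (0,1)`, then for `S ~ k-DPP(AᵀA)`,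
`E[Er_A(S)] ≤ c·γ·(1 + δk)·OPT_k` where `γ = c₂/c₁` and `c` is an absolute constant. -/
theorem exp_decay :
    ∃ c : ℝ, 0 < c ∧
      ∀ (m n : ℕ) (A : Matrix (Fin m) (Fin n) ℝ) (lam : Fin n → ℝ),
        Antitone lam → IsEigs (Aᵀ * A) lam →
        ∀ (δ c₁ c₂ : ℝ), 0 < δ → δ < 1 → 0 < c₁ → c₁ ≤ c₂ →
        (∀ i : Fin n,
          c₁ * (1 - δ) ^ ((i : ℕ) + 1) ≤ lam i ∧
            lam i ≤ c₂ * (1 - δ) ^ ((i : ℕ) + 1)) →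
        ∀ k : ℕ, 1 ≤ k → k < n →
          kDPPExp A k (Er A) ≤ c * (c₂ / c₁) * (1 + δ * (k : ℝ)) * opt lam k := by
  refine ⟨4, by norm_num, ?_⟩
  intro m n A lam _hanti hEigs δ c₁ c₂ hδ0 hδ1 hc₁ hc12 hband k hk1 hkn
  classical
  obtain ⟨hK, σ, hlam⟩ := hEigs
  have hlam_eq : ∀ j : ℕ, esym lam Finset.univ j = esym hK.eigenvalues Finset.univ j := by
    intro j
    have : lam = fun i => hK.eigenvalues (σ i) := funext hlam
    rw [this]
    exact esym_perm hK.eigenvalues σ j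
  have hD : ∑ S ∈ Finset.univ.filter (fun S : Finset (Fin n) => S.card = k), pdet (Aᵀ * A) S
      = esym lam Finset.univ k := by
    rw [pdet_sum_eq_esym (Aᵀ * A) hK k, hlam_eq]
  have hN : ∑ S ∈ Finset.univ.filter (fun S : Finset (Fin n) => S.card = k),
      pdet (Aᵀ * A) S * Er A S = ((k:ℝ)+1) * esym lam Finset.univ (k+1) := by
    calc ∑ S ∈ Finset.univ.filter (fun S : Finset (Fin n) => S.card = k),
        pdet (Aᵀ * A) S * Er A S
        = ∑ S ∈ Finset.univ.filter (fun S : Finset (Fin n) => S.card = k),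
          ∑ j ∈ Sᶜ, pdet (Aᵀ * A) (insert j S) :=
          Finset.sum_congr rfl fun S _ => pdet_mul_Er A S
      _ = ((k:ℝ)+1) * ∑ T ∈ Finset.univ.filter (fun T : Finset (Fin n) => T.card = k+1),
          pdet (Aᵀ * A) T := insert_pairing k _
      _ = ((k:ℝ)+1) * esym lam Finset.univ (k+1) := by
          rw [pdet_sum_eq_esym (Aᵀ * A) hK (k+1), hlam_eq]
  have hlam_pos : ∀ i ∈ (Finset.univ : Finset (Fin n)), 0 < lam i := by
    intro i _
    have h := (hband i).1
    have : (0:ℝ) < c₁ * (1 - δ) ^ ((i : ℕ) + 1) := by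
      apply mul_pos hc₁
      apply pow_pos
      linarith
    linarith
  have hDpos : 0 < esym lam Finset.univ k := by
    refine esym_pos hlam_pos ?_
    simpa using hkn.le
  rw [kDPPExp, hD, hN, div_le_iff₀ hDpos]
  have hbound := esym_ratio_bound lam δ c₁ c₂ hδ0 hδ1 hc₁ hc12 hband k hkn
  calc ((k:ℝ)+1) * esym lam Finset.univ (k+1)
      ≤ 4 * (c₂/c₁) * (1 + δ*(k:ℝ)) * (∑ i ∈ Finset.univ.filter (fun i : Fin n => k ≤ (i : ℕ)),
        lam i) * esym lam Finset.univ k := hbound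
    _ = 4 * (c₂/c₁) * (1 + δ*(k:ℝ)) * opt lam k * esym lam Finset.univ k := by rw [opt]


end CSSP
end

section
/- Expected projection matrix under DPP sampling. For any m×n real matrix A, Σ_{S ⊆ {1,...,n}} det(A_SᵀA_S)·P_S = det(I_n + AᵀA) · A(I_n + AᵀA)^{−1}Aᵀ; equivalently, if S ~ DPP(AᵀA), then E[P_S] = A(I_n + AᵀA)^{−1}Aᵀ. -/
open scoped BigOperators
open Matrix

namespace CSSP

variable {m n : ℕ}

/-- The `m×m` orthogonal projection matrix onto the span of the columns of `A` indexed by `S`. -/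
noncomputable def projMat (A : Matrix (Fin m) (Fin n) ℝ) (S : Finset (Fin n)) :
    Matrix (Fin m) (Fin m) ℝ :=
  Matrix.of fun i j =>
    (Submodule.orthogonalProjectionOnto (colSpan A S) (EuclideanSpace.single j 1) :
      EuclideanSpace ℝ (Fin m)) i

section Aux

variable {m n : ℕ}

/-- The columns of `A` indexed by `s`, as a matrix. -/
noncomputable def sub (A : Matrix (Fin m) (Fin n) ℝ) (s : Finset (Fin n)) :
    Matrix (Fin m) {x : Fin n // x ∈ s} ℝ :=
  A.submatrix id (fun i => (i : Fin n))

/-- The Gram matrix of the columns of `A` indexed by `s`. -/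
noncomputable def gram (A : Matrix (Fin m) (Fin n) ℝ) (s : Finset (Fin n)) :
    Matrix {x : Fin n // x ∈ s} {x : Fin n // x ∈ s} ℝ :=
  (sub A s)ᵀ * sub A s

lemma pdet_eq_gram_s9 (A : Matrix (Fin m) (Fin n) ℝ) (s : Finset (Fin n)) :
    pdet (Aᵀ * A) s = (gram A s).det := by
  unfold pdet gram sub
  congr 1

lemma dot_self_nonneg (v : Fin m → ℝ) : 0 ≤ v ⬝ᵥ v :=
  Finset.sum_nonneg fun i _ => mul_self_nonneg _

lemma gram_ker {ι : Type*} [Fintype ι] (B : Matrix (Fin m) ι ℝ) (c : ι → ℝ)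
    (h : (Bᵀ * B) *ᵥ c = 0) : B *ᵥ c = 0 := by
  have h1 : (B *ᵥ c) ⬝ᵥ (B *ᵥ c) = c ⬝ᵥ ((Bᵀ * B) *ᵥ c) := by
    rw [← Matrix.mulVec_mulVec, Matrix.dotProduct_mulVec c, Matrix.vecMul_transpose]
  rw [h, dotProduct_zero] at h1
  exact dotProduct_self_eq_zero.mp h1

lemma det_one_add_ne_zero (A : Matrix (Fin m) (Fin n) ℝ) :
    (1 + Aᵀ * A).det ≠ 0 := by
  intro hdet
  obtain ⟨c, hc0, hc⟩ := (Matrix.exists_mulVec_eq_zero_iff).mpr hdet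
  have h1 : c ⬝ᵥ ((1 + Aᵀ * A) *ᵥ c) = 0 := by rw [hc, dotProduct_zero]
  rw [Matrix.add_mulVec, Matrix.one_mulVec, dotProduct_add] at h1
  have h2 : c ⬝ᵥ ((Aᵀ * A) *ᵥ c) = (A *ᵥ c) ⬝ᵥ (A *ᵥ c) := by
    rw [← Matrix.mulVec_mulVec, Matrix.dotProduct_mulVec c, Matrix.vecMul_transpose]
  have h3 : 0 < c ⬝ᵥ c := by
    rcases lt_or_eq_of_le (dot_self_nonneg c) with h | h
    · exact h
    · exact absurd (dotProduct_self_eq_zero.mp h.symm) hc0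
  rw [h2] at h1
  nlinarith [dot_self_nonneg (A *ᵥ c)]

lemma det_piecewise_s9 (M : Matrix (Fin n) (Fin n) ℝ) (s : Finset (Fin n)) :
    Matrix.det (Matrix.of (s.piecewise (fun i => M i) (fun i => Pi.single i 1))) = pdet M s := by
  classical
  rw [← Matrix.det_submatrix_equiv_self (Equiv.sumCompl (fun x : Fin n => x ∈ s))]
  have hB : (Matrix.of (s.piecewise (fun i => M i) (fun i => Pi.single i 1))).submatrix
        (Equiv.sumCompl (fun x : Fin n => x ∈ s)) (Equiv.sumCompl (fun x : Fin n => x ∈ s))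
      = Matrix.fromBlocks
          (M.submatrix (fun i : {x : Fin n // x ∈ s} => (i : Fin n))
            (fun i : {x : Fin n // x ∈ s} => (i : Fin n)))
          (M.submatrix (fun i : {x : Fin n // x ∈ s} => (i : Fin n))
            (fun i : {x : Fin n // ¬ x ∈ s} => (i : Fin n)))
          0 1 := by
    ext i j
    rcases i with i | i <;> rcases j with j | j <;>
      simp only [Equiv.sumCompl_apply_inl, Equiv.sumCompl_apply_inr, Matrix.submatrix_apply,
        Matrix.of_apply, Finset.piecewise, i.2, j.2, if_true, if_false,
        Matrix.fromBlocks_apply₁₁, Matrix.fromBlocks_apply₁₂, Matrix.fromBlocks_apply₂₁,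
        Matrix.fromBlocks_apply₂₂, Pi.single_apply, Matrix.one_apply, Matrix.zero_apply]
    · exact if_neg fun (h : (j : Fin n) = (i : Fin n)) => i.2 (h ▸ j.2)
    · by_cases h : (i : Fin n) = (j : Fin n)
      · rw [if_pos h.symm, if_pos (Subtype.ext h)]
      · rw [if_neg fun hh => h hh.symm, if_neg fun hh => h (congrArg Subtype.val hh)]
  rw [hB, Matrix.det_fromBlocks_zero₂₁, Matrix.det_one, mul_one, pdet]

lemma det_one_add_eq_sum (M : Matrix (Fin n) (Fin n) ℝ) :
    (1 + M).det = ∑ s : Finset (Fin n), pdet M s := by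
  classical
  have h : (1 + M) = Matrix.of ((fun i => M i) + (fun i => (Pi.single i 1 : Fin n → ℝ))) := by
    ext i j
    simp [Matrix.one_apply, Pi.single_apply, eq_comm, add_comm]
  rw [h]
  show (Matrix.detRowAlternating (R := ℝ) (n := Fin n)).toMultilinearMap
      ((fun i => M i) + (fun i => Pi.single i 1)) = _
  rw [(Matrix.detRowAlternating (R := ℝ) (n := Fin n)).toMultilinearMap.map_add_univ
    (fun i => M i) (fun i => Pi.single i 1)]
  exact Finset.sum_congr rfl fun s _ => det_piecewise_s9 M s

lemma mulVec_mem_colSpan (A : Matrix (Fin m) (Fin n) ℝ) (s : Finset (Fin n))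
    (c : {x : Fin n // x ∈ s} → ℝ) :
    (WithLp.toLp 2 (sub A s *ᵥ c) : EuclideanSpace ℝ (Fin m)) ∈ colSpan A s := by
  have h : (WithLp.toLp 2 (sub A s *ᵥ c) : EuclideanSpace ℝ (Fin m))
      = ∑ j : {x : Fin n // x ∈ s}, c j • col A (j : Fin n) := by
    ext i
    simp [Matrix.mulVec, dotProduct, sub, col, mul_comm]
  rw [h]
  exact Submodule.sum_mem _ fun j _ =>
    Submodule.smul_mem _ _ (Submodule.subset_span ⟨(j : Fin n), j.2, rfl⟩)

lemma orthProj_eq (A : Matrix (Fin m) (Fin n) ℝ) (s : Finset (Fin n))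
    (hG : (gram A s).det ≠ 0) (x : EuclideanSpace ℝ (Fin m)) :
    (Submodule.orthogonalProjectionOnto (colSpan A s) x : EuclideanSpace ℝ (Fin m))
      = WithLp.toLp 2 ((sub A s * (gram A s)⁻¹ * (sub A s)ᵀ) *ᵥ WithLp.ofLp x) := by
  have hunit : IsUnit (gram A s).det := isUnit_iff_ne_zero.mpr hG
  apply Submodule.eq_starProjection_of_mem_of_inner_eq_zero
  · rw [← Matrix.mulVec_mulVec, ← Matrix.mulVec_mulVec]
    exact mulVec_mem_colSpan A s _
  · intro w hw
    have key : (sub A s)ᵀ *ᵥ ((fun i => x i : Fin m → ℝ) -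
        (sub A s * (gram A s)⁻¹ * (sub A s)ᵀ) *ᵥ (fun i => x i : Fin m → ℝ)) = 0 := by
      rw [Matrix.mulVec_sub, Matrix.mulVec_mulVec, ← Matrix.mul_assoc, ← Matrix.mul_assoc,
        show (sub A s)ᵀ * sub A s = gram A s from rfl, Matrix.mul_nonsing_inv _ hunit,
        Matrix.one_mul, sub_self]
    induction hw using Submodule.span_induction with
    | mem w hwmem =>
      obtain ⟨j, hj, rfl⟩ := hwmem
      have hthis : ∑ i, A i j * (x i - ((sub A s * (gram A s)⁻¹ * (sub A s)ᵀ) *ᵥ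
          (fun i => x i : Fin m → ℝ)) i) = 0 := congrFun key ⟨j, hj⟩
      simp only [PiLp.inner_apply, RCLike.inner_apply', conj_trivial, PiLp.sub_apply, col, PiLp.toLp_apply]
      refine Eq.trans ?_ hthis
      exact Finset.sum_congr rfl fun i _ => mul_comm _ _
    | zero => simp
    | add w₁ w₂ _ _ h1 h2 => rw [inner_add_right, h1, h2, add_zero]
    | smul a w _ h1 => rw [inner_smul_right, h1, mul_zero]

lemma projMat_eq (A : Matrix (Fin m) (Fin n) ℝ) (s : Finset (Fin n))
    (hG : (gram A s).det ≠ 0) :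
    projMat A s = sub A s * (gram A s)⁻¹ * (sub A s)ᵀ := by
  ext i j
  show (Submodule.orthogonalProjectionOnto (colSpan A s) (EuclideanSpace.single j 1) :
      EuclideanSpace ℝ (Fin m)) i = _
  rw [orthProj_eq A s hG]
  simp only [PiLp.toLp_apply, Matrix.mulVec, dotProduct, EuclideanSpace.single_apply, mul_ite, mul_one,
    mul_zero]
  rw [Finset.sum_ite_eq' Finset.univ j]
  simp

lemma key_entry (A : Matrix (Fin m) (Fin n) ℝ) (x_ y_ : Fin m) (s : Finset (Fin n)) :
    pdet (Aᵀ * A) s * projMat A s x_ y_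
      = pdet (Aᵀ * A + Matrix.of (fun i j => A y_ i * A x_ j)) s - pdet (Aᵀ * A) s := by
  classical
  set u : {x : Fin n // x ∈ s} → ℝ := fun i => A y_ (i : Fin n) with hu
  set v : {x : Fin n // x ∈ s} → ℝ := fun i => A x_ (i : Fin n) with hv
  have hsub : pdet (Aᵀ * A + Matrix.of (fun i j => A y_ i * A x_ j)) s
      = (gram A s + Matrix.replicateCol Unit u * Matrix.replicateRow Unit v).det := by
    unfold pdet
    congr 1
    ext i j
    simp [Matrix.mul_apply, gram, sub, hu, hv]
  rw [pdet_eq_gram_s9, hsub]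
  by_cases hG : (gram A s).det = 0
  · obtain ⟨c, hc0, hc⟩ := Matrix.exists_mulVec_eq_zero_iff.mpr hG
    have hBc : sub A s *ᵥ c = 0 := gram_ker _ _ hc
    have h2 : (gram A s + Matrix.replicateCol Unit u * Matrix.replicateRow Unit v) *ᵥ c = 0 := by
      rw [Matrix.add_mulVec, hc, zero_add, ← Matrix.mulVec_mulVec]
      have hvc : Matrix.replicateRow Unit v *ᵥ c = 0 := by
        funext t
        have h3 : (Matrix.replicateRow Unit v *ᵥ c) t = (sub A s *ᵥ c) x_ := by
          simp [Matrix.mulVec, dotProduct, sub, hv]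
        rw [h3, hBc, Pi.zero_apply, Pi.zero_apply]
      rw [hvc, Matrix.mulVec_zero]
    have h4 : (gram A s + Matrix.replicateCol Unit u * Matrix.replicateRow Unit v).det = 0 :=
      Matrix.exists_mulVec_eq_zero_iff.mp ⟨c, hc0, h2⟩
    rw [hG, h4, zero_mul, sub_zero]
  · have hunit : IsUnit (gram A s).det := isUnit_iff_ne_zero.mpr hG
    rw [projMat_eq A s hG, Matrix.det_add_replicateCol_mul_replicateRow hunit,
      Matrix.det_unique (1 + Matrix.replicateRow Unit v * (gram A s)⁻¹ * Matrix.replicateCol Unit u)]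
    have hentry : ((1 + Matrix.replicateRow Unit v * (gram A s)⁻¹ * Matrix.replicateCol Unit u :
          Matrix Unit Unit ℝ)) default default
        = 1 + ∑ j, (∑ i, v i * (gram A s)⁻¹ i j) * u j := by
      simp [Matrix.add_apply, Matrix.one_apply, Matrix.mul_apply]
    rw [hentry]
    have hproj : (sub A s * (gram A s)⁻¹ * (sub A s)ᵀ) x_ y_
        = ∑ j, (∑ i, v i * (gram A s)⁻¹ i j) * u j := by
      simp [Matrix.mul_apply, sub, hu, hv]
    rw [hproj]
    ring

end Aux

/-- Expected projection matrix under DPP sampling: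
`Σ_S det(A_SᵀA_S)·P_S = det(I + AᵀA)·A(I + AᵀA)⁻¹Aᵀ`; equivalently, if `S ~ DPP(AᵀA)` then

`E[P_S] = A(I + AᵀA)⁻¹Aᵀ`. -/
theorem expected_projection {m n : ℕ} (A : Matrix (Fin m) (Fin n) ℝ) :
    (∑ S : Finset (Fin n), pdet (Aᵀ * A) S • projMat A S) =
        (1 + Aᵀ * A).det • (A * (1 + Aᵀ * A)⁻¹ * Aᵀ) ∧
      ((1 + Aᵀ * A).det)⁻¹ • (∑ S : Finset (Fin n), pdet (Aᵀ * A) S • projMat A S) =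
        A * (1 + Aᵀ * A)⁻¹ * Aᵀ := by
  classical
  have hd : (1 + Aᵀ * A).det ≠ 0 := det_one_add_ne_zero A
  have hmain : (∑ S : Finset (Fin n), pdet (Aᵀ * A) S • projMat A S) =
      (1 + Aᵀ * A).det • (A * (1 + Aᵀ * A)⁻¹ * Aᵀ) := by
    ext x_ y_
    rw [Matrix.sum_apply]
    have hterm : ∀ s : Finset (Fin n), (pdet (Aᵀ * A) s • projMat A s) x_ y_
        = pdet (Aᵀ * A + Matrix.of (fun i j => A y_ i * A x_ j)) s - pdet (Aᵀ * A) s :=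
      fun s => by rw [Matrix.smul_apply, smul_eq_mul, key_entry]
    rw [Finset.sum_congr rfl (fun s _ => hterm s), Finset.sum_sub_distrib,
      ← det_one_add_eq_sum, ← det_one_add_eq_sum]
    have h1 : (1 : Matrix (Fin n) (Fin n) ℝ) + (Aᵀ * A + Matrix.of fun i j => A y_ i * A x_ j)
        = (1 + Aᵀ * A) + Matrix.replicateCol Unit (fun i => A y_ i) * Matrix.replicateRow Unit (fun j => A x_ j) := by
      ext i j
      simp [Matrix.mul_apply, add_assoc]
    rw [h1, Matrix.det_add_replicateCol_mul_replicateRow (isUnit_iff_ne_zero.mpr hd),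
      Matrix.det_unique (1 + Matrix.replicateRow Unit (fun j => A x_ j) * (1 + Aᵀ * A)⁻¹ *
        Matrix.replicateCol Unit (fun i => A y_ i))]
    have hentry : ((1 + Matrix.replicateRow Unit (fun j => A x_ j) * (1 + Aᵀ * A)⁻¹ *
          Matrix.replicateCol Unit (fun i => A y_ i) : Matrix Unit Unit ℝ)) default default
        = 1 + ∑ j : Fin n, (∑ i : Fin n, A x_ i * ((1 + Aᵀ * A)⁻¹ : Matrix (Fin n) (Fin n) ℝ) i j) * A y_ j := by
      simp [Matrix.add_apply, Matrix.one_apply, Matrix.mul_apply]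
    rw [hentry, Matrix.smul_apply, smul_eq_mul]
    have hAP : ((A * (1 + Aᵀ * A)⁻¹ * Aᵀ) : Matrix (Fin m) (Fin m) ℝ) x_ y_
        = ∑ j : Fin n, (∑ i : Fin n, A x_ i * ((1 + Aᵀ * A)⁻¹ : Matrix (Fin n) (Fin n) ℝ) i j) * A y_ j := by
      simp [Matrix.mul_apply]
    rw [hAP]
    ring
  refine ⟨hmain, ?_⟩
  rw [hmain, smul_smul, inv_mul_cancel₀ hd, one_smul]

end CSSP
end

section
/- Nyström trace-norm error equals CSSP projection error. Let A be an m×n real matrix, K = AᵀA, and let S ⊆ {1,...,n} be a subset such that the |S|×|S| principal submatrix B = K_{S,S} is invertible. Let C be the n×|S| submatrix of K consisting of the columns indexed by S, and define the Nyström approximation K̂(S) = C·B^{−1}·Cᵀ. Then K − K̂(S) is positive semidefinite and tr(K − K̂(S)) = Er_A(S); consequently the trace norm satisfies ‖K − K̂(S)‖_* = Er_A(S). -/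
open scoped BigOperators
open Matrix

namespace CSSP

variable {m n : ℕ}

/-- Nyström trace-norm error equals CSSP projection error: with `K = AᵀA`, `B = K_{S,S}`
invertible and `C` the columns of `K` indexed by `S`, the Nyström approximation
`K̂(S) = CB⁻¹Cᵀ` satisfies `K − K̂(S) ⪰ 0` and `tr(K − K̂(S)) = Er_A(S)` (so the trace norm of
the p.s.d. matrix `K − K̂(S)` equals `Er_A(S)`). -/
theorem nystrom_trace_error {m n : ℕ} (A : Matrix (Fin m) (Fin n) ℝ) (S : Finset (Fin n))
    (B : Matrix {x : Fin n // x ∈ S} {x : Fin n // x ∈ S} ℝ)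
    (hBdef : B = (Aᵀ * A).submatrix (fun i : {x : Fin n // x ∈ S} => (i : Fin n))
      (fun i : {x : Fin n // x ∈ S} => (i : Fin n)))
    (hB : IsUnit B.det)
    (C : Matrix (Fin n) {x : Fin n // x ∈ S} ℝ)
    (hCdef : C = (Aᵀ * A).submatrix id (fun i : {x : Fin n // x ∈ S} => (i : Fin n)))
    (Khat : Matrix (Fin n) (Fin n) ℝ) (hKhat : Khat = C * B⁻¹ * Cᵀ) :
    (Aᵀ * A - Khat).PosSemidef ∧ (Aᵀ * A - Khat).trace = Er A S := by
  classical
  set D : Matrix (Fin m) {x : Fin n // x ∈ S} ℝ :=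
    A.submatrix id (fun i : {x : Fin n // x ∈ S} => (i : Fin n)) with hD
  have hBD : B = Dᵀ * D := by
    rw [hBdef]
    ext s t
    simp [Matrix.mul_apply, hD]
  have hCD : C = Aᵀ * D := by
    rw [hCdef]
    ext s t
    simp [Matrix.mul_apply, hD]
  set P : Matrix (Fin m) (Fin m) ℝ := D * B⁻¹ * Dᵀ with hP
  have hBsym : Bᵀ = B := by rw [hBD]; simp [Matrix.transpose_mul]
  have hBiB : B⁻¹ * B = 1 := Matrix.nonsing_inv_mul B hB
  have hBBi : B * B⁻¹ = 1 := Matrix.mul_nonsing_inv B hB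
  have hPsym : Pᵀ = P := by
    rw [hP]
    rw [Matrix.transpose_mul, Matrix.transpose_mul, Matrix.transpose_transpose,
      Matrix.transpose_nonsing_inv, hBsym, Matrix.mul_assoc]
  have hDtP : Dᵀ * P = Dᵀ := by
    rw [hP, ← Matrix.mul_assoc, ← Matrix.mul_assoc, ← hBD, hBBi, Matrix.one_mul]
  have hPP : P * P = P := by
    calc P * P = (D * B⁻¹) * (Dᵀ * P) := by rw [hP, Matrix.mul_assoc]
      _ = (D * B⁻¹) * Dᵀ := by rw [hDtP]
      _ = P := hP.symm
  set M : Matrix (Fin m) (Fin n) ℝ := A - P * A with hM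
  have hKhat2 : Khat = Aᵀ * (P * A) := by
    rw [hKhat, hCD, hP, Matrix.transpose_mul]
    simp only [Matrix.mul_assoc, Matrix.transpose_transpose]
  have hPA : (P * A)ᵀ * (P * A) = Aᵀ * (P * A) := by
    rw [Matrix.transpose_mul, hPsym, Matrix.mul_assoc, ← Matrix.mul_assoc P P A, hPP]
  have hPA2 : (P * A)ᵀ * A = Aᵀ * (P * A) := by
    rw [Matrix.transpose_mul, hPsym, Matrix.mul_assoc]
  have hMtM : Mᵀ * M = Aᵀ * A - Khat := by
    rw [hKhat2, hM]
    simp only [Matrix.transpose_sub, Matrix.sub_mul, Matrix.mul_sub, hPA, hPA2]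
    abel
  have hDtM : Dᵀ * M = 0 := by
    rw [hM, Matrix.mul_sub, ← Matrix.mul_assoc, hDtP, sub_self]
  -- the projection of each column is given by P
  have hproj : ∀ j, (Submodule.orthogonalProjectionOnto (colSpan A S) (col A j) :
      EuclideanSpace ℝ (Fin m)) = WithLp.toLp 2 (fun i => (P * A) i j) := by
    intro j
    rw [Submodule.coe_orthogonalProjectionOnto_apply]
    apply Submodule.eq_starProjection_of_mem_of_inner_eq_zero
    · have hrep : (WithLp.toLp 2 (fun i => (P * A) i j) : EuclideanSpace ℝ (Fin m)) =
          ∑ s : {x : Fin n // x ∈ S}, ((B⁻¹ * (Dᵀ * A)) s j) • col A (s : Fin n) := by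
        ext i
        have h1 : (P * A) i j = ∑ s : {x : Fin n // x ∈ S}, D i s * (B⁻¹ * (Dᵀ * A)) s j := by
          rw [hP, Matrix.mul_assoc, Matrix.mul_assoc, Matrix.mul_apply]
        have h2 : (∑ s : {x : Fin n // x ∈ S}, ((B⁻¹ * (Dᵀ * A)) s j) • col A (s : Fin n)) i
            = ∑ s : {x : Fin n // x ∈ S}, ((B⁻¹ * (Dᵀ * A)) s j) * A i (s : Fin n) := by
          rw [WithLp.ofLp_sum, Finset.sum_apply]
          simp [col]
        rw [h2]
        change (P * A) i j = _
        rw [h1]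
        refine Finset.sum_congr rfl fun s _ => ?_
        simp [hD, mul_comm]
      rw [hrep]
      exact Submodule.sum_mem _ fun s _ => Submodule.smul_mem _ _
        (Submodule.subset_span ⟨(s : Fin n), s.2, rfl⟩)
    · intro w hw
      unfold colSpan at hw
      induction hw using Submodule.span_induction with
      | mem x hx =>
        obtain ⟨s, hs, rfl⟩ := hx
        have h0 : (Dᵀ * M) ⟨s, hs⟩ j = 0 := by rw [hDtM]; rfl
        rw [Matrix.mul_apply] at h0
        have h0' : ∑ i, (A i j - (P * A) i j) * A i s = 0 := by
          rw [← h0]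
          refine Finset.sum_congr rfl fun i _ => ?_
          simp [hD, hM, Matrix.sub_apply, mul_comm]
        simp only [PiLp.inner_apply, RCLike.inner_apply, conj_trivial]
        rw [← h0']
        refine Finset.sum_congr rfl fun i _ => ?_
        simp [col, hM, Matrix.sub_apply, mul_comm]
      | zero => simp
      | add x y hx hy ihx ihy => rw [inner_add_right, ihx, ihy, add_zero]
      | smul a x hx ih => rw [real_inner_smul_right, ih, mul_zero]
  have hEr : (Aᵀ * A - Khat).trace = Er A S := by
    rw [← hMtM]
    unfold Er
    rw [Matrix.trace]
    refine Finset.sum_congr rfl fun j _ => ?_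
    rw [hproj j, ← real_inner_self_eq_norm_sq]
    simp only [PiLp.inner_apply, RCLike.inner_apply, conj_trivial]
    have h4 : ∀ x : Fin m, ∑ x' : Fin m, A x' j * P x x' = ∑ x' : Fin m, P x x' * A x' j :=
      fun x => Finset.sum_congr rfl fun x' _ => mul_comm _ _
    simp only [Matrix.diag_apply, Matrix.mul_apply, Matrix.transpose_apply, Matrix.sub_apply,
      PiLp.sub_apply, col, h4]
    simp only [hM, Matrix.sub_apply, Matrix.mul_apply]
  refine ⟨?_, hEr⟩
  rw [← hMtM, ← Matrix.conjTranspose_eq_transpose_of_trivial]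
  exact Matrix.posSemidef_conjTranspose_mul_self M


end CSSP
end
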